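/- Let W be a binary-input channel with finite output alphabet 𝒴, and define W⁻ : {0,1} → 𝒴 × 𝒴 by W⁻((y₁,y₂)|s) = (1/2)·∑_{u₁,u₂∈{0,1}, u₁⊕u₂=s} W(y₁|u₁)·W(y₂|u₂). Then the Bhattacharyya parameters satisfy Z(W⁻) ≤ 1 − (1 − Z(W))², equivalently Z(W⁻) ≤ 2·Z(W) − Z(W)². -/
import Mathlib

lemma key_ineq (a b c d : ℝ) (ha : 0 ≤ a) (hb : 0 ≤ b) (hc : 0 ≤ c) (hd : 0 ≤ d) :
    Real.sqrt ((1/2 * (a*c + b*d)) * (1/2 * (a*d + b*c)))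
      ≤ (1/2) * (Real.sqrt (a*b) * (c + d) + Real.sqrt (c*d) * (a + b)
          - 2 * Real.sqrt (a*b) * Real.sqrt (c*d)) := by
  set p := Real.sqrt a with hp
  set q := Real.sqrt b with hq
  set r := Real.sqrt c with hr
  set s := Real.sqrt d with hs
  have hp0 : 0 ≤ p := Real.sqrt_nonneg a
  have hq0 : 0 ≤ q := Real.sqrt_nonneg b
  have hr0 : 0 ≤ r := Real.sqrt_nonneg c
  have hs0 : 0 ≤ s := Real.sqrt_nonneg d
  have hpa : p ^ 2 = a := Real.sq_sqrt ha
  have hqb : q ^ 2 = b := Real.sq_sqrt hb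
  have hrc : r ^ 2 = c := Real.sq_sqrt hc
  have hsd : s ^ 2 = d := Real.sq_sqrt hd
  have hab : Real.sqrt (a*b) = p * q := by rw [Real.sqrt_mul ha]
  have hcd : Real.sqrt (c*d) = r * s := by rw [Real.sqrt_mul hc]
  rw [hab, hcd]
  have hRHS : 0 ≤ (1/2) * (p*q * (c + d) + r*s * (a + b) - 2 * (p*q) * (r*s)) := by
    nlinarith [sq_nonneg (r - s), mul_nonneg hp0 hq0, mul_nonneg hr0 hs0,
      mul_nonneg (mul_nonneg hp0 hq0) (sq_nonneg (r - s)),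
      mul_nonneg (mul_nonneg hr0 hs0) (add_nonneg ha hb)]
  have hineq : (1/2 * (a*c + b*d)) * (1/2 * (a*d + b*c))
      ≤ ((1/2) * (p*q * (c + d) + r*s * (a + b) - 2 * (p*q) * (r*s))) ^ 2 := by
    have h1 : 0 ≤ p * q * (r * s) * ((p - q) * (r - s)) ^ 2 :=
      mul_nonneg (mul_nonneg (mul_nonneg hp0 hq0) (mul_nonneg hr0 hs0)) (sq_nonneg _)
    rw [← hpa, ← hqb, ← hrc, ← hsd]
    nlinarith [h1]
  calc Real.sqrt ((1/2 * (a*c + b*d)) * (1/2 * (a*d + b*c)))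
      ≤ Real.sqrt (((1/2) * (p*q * (c + d) + r*s * (a + b) - 2 * (p*q) * (r*s))) ^ 2) :=
        Real.sqrt_le_sqrt hineq
    _ = (1/2) * (p*q * (c + d) + r*s * (a + b) - 2 * (p*q) * (r*s)) := Real.sqrt_sq hRHS


/-- For a binary-input channel `W` with finite output alphabet, the channel
`W⁻((y₁,y₂)|s) = (1/2)·∑_{u₁⊕u₂=s} W(y₁|u₁)·W(y₂|u₂)` satisfies
`Z(W⁻) ≤ 1 − (1 − Z(W))²`, where `Z` denotes the Bhattacharyya parameter. -/
theorem bhattacharyya_wminus_le {𝒴 : Type*} [Fintype 𝒴]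
    (W : Bool → 𝒴 → ℝ)
    (hW_nonneg : ∀ x y, 0 ≤ W x y)
    (hW_sum : ∀ x, ∑ y, W x y = 1)
    (Wm : Bool → 𝒴 × 𝒴 → ℝ)
    (hWm : ∀ s p, Wm s p =
      (1/2) * ∑ u₁ : Bool, ∑ u₂ : Bool,
        if xor u₁ u₂ = s then W u₁ p.1 * W u₂ p.2 else 0) :
    ∑ p : 𝒴 × 𝒴, Real.sqrt (Wm false p * Wm true p)
      ≤ 1 - (1 - ∑ y : 𝒴, Real.sqrt (W false y * W true y)) ^ 2 := by
  set Z := ∑ y : 𝒴, Real.sqrt (W false y * W true y) with hZ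
  set s : 𝒴 → ℝ := fun y => Real.sqrt (W false y * W true y) with hs
  set t : 𝒴 → ℝ := fun y => W false y + W true y with ht
  have h2 : ∑ y : 𝒴, t y = 2 := by
    simp only [ht, Finset.sum_add_distrib, hW_sum]; norm_num
  have hWmf : ∀ p : 𝒴 × 𝒴, Wm false p
      = 1/2 * (W false p.1 * W false p.2 + W true p.1 * W true p.2) := by
    intro p; rw [hWm]; simp [Fintype.sum_bool]; ring
  have hWmt : ∀ p : 𝒴 × 𝒴, Wm true p
      = 1/2 * (W false p.1 * W true p.2 + W true p.1 * W false p.2) := by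
    intro p; rw [hWm]; simp [Fintype.sum_bool]; ring
  have hkey : ∀ p : 𝒴 × 𝒴, Real.sqrt (Wm false p * Wm true p)
      ≤ (1/2) * (s p.1 * t p.2 + s p.2 * t p.1 - 2 * s p.1 * s p.2) := by
    intro p
    rw [hWmf, hWmt]
    exact key_ineq _ _ _ _ (hW_nonneg _ _) (hW_nonneg _ _) (hW_nonneg _ _) (hW_nonneg _ _)
  have e1 : ∑ p : 𝒴 × 𝒴, s p.1 * t p.2 = Z * 2 := by
    rw [Fintype.sum_prod_type, ← Finset.sum_mul_sum, h2]
  have e2 : ∑ p : 𝒴 × 𝒴, s p.2 * t p.1 = Z * 2 := by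
    rw [Fintype.sum_prod_type, Finset.sum_comm, ← Finset.sum_mul_sum, h2]
  have e3 : ∑ p : 𝒴 × 𝒴, 2 * s p.1 * s p.2 = 2 * Z * Z := by
    rw [Fintype.sum_prod_type]
    simp_rw [mul_assoc, ← Finset.mul_sum, ← hZ, ← Finset.sum_mul]
    try ring
  calc ∑ p : 𝒴 × 𝒴, Real.sqrt (Wm false p * Wm true p)
      ≤ ∑ p : 𝒴 × 𝒴, (1/2) * (s p.1 * t p.2 + s p.2 * t p.1 - 2 * s p.1 * s p.2) :=
        Finset.sum_le_sum fun p _ => hkey p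
    _ = 1 - (1 - Z) ^ 2 := by
        rw [← Finset.mul_sum, Finset.sum_sub_distrib, Finset.sum_add_distrib, e1, e2, e3]
        ring
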